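/- Let G be a finite simple graph that is K_{1,3}-free and ((K_2 ∪ K_1) + K_2)-free, and let u be a vertex. Then deg(u) ≤ 2ω(⟨N̄(u)⟩) − 2 unless the induced subgraph on N(u) is a 5-cycle, in which case deg(u) = 5 and ω(⟨N̄(u)⟩) = 3. -/

import Mathlib

open SimpleGraph

/-- The claw `K_{1,3}`. -/
def claw : SimpleGraph (Fin 1 ⊕ Fin 3) := completeBipartiteGraph (Fin 1) (Fin 3)

/-- The graph `(K_2 ∪ K_1) + K_2`: vertices `3,4` are adjacent to everything,
`0,1` are adjacent, and `2` is adjacent only to `3,4`. -/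
def kkJoin : SimpleGraph (Fin 5) := SimpleGraph.fromEdgeSet
  {s(0,1), s(3,4), s(0,3), s(0,4), s(1,3), s(1,4), s(2,3), s(2,4)}

/-- `G` has no induced subgraph isomorphic to `H`. -/
def Free {W V : Type*} (H : SimpleGraph W) (G : SimpleGraph V) : Prop := IsEmpty (H ↪g G)

noncomputable def maxDeg {V : Type*} [Fintype V] (G : SimpleGraph V) : ℕ := by
  classical exact G.maxDegree

noncomputable def deg {V : Type*} [Fintype V] (G : SimpleGraph V) (v : V) : ℕ := by
  classical exact G.degree v

/-- A graph is a path graph. -/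
def IsPathGraph {V : Type*} (G : SimpleGraph V) : Prop := ∃ n, Nonempty (G ≃g pathGraph n)

/-- A graph is a cycle graph. -/
def IsCycleGraph {V : Type*} (G : SimpleGraph V) : Prop :=
  ∃ n, 3 ≤ n ∧ Nonempty (G ≃g cycleGraph n)

section Aux
open Finset

variable {W : Type*}

/-- In a set where every element has at most one "F-partner", we can select at least half
the elements pairwise non-partnered (here: pairwise `H.Adj`). -/
lemma matching_indep [DecidableEq W] (H : SimpleGraph W)
    (Fadj : W → W → Prop) [DecidableRel Fadj]
    (hco : ∀ x y, x ≠ y → ¬ Fadj x y → H.Adj x y) :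
    ∀ (n : ℕ) (S : Finset W), S.card ≤ n →
      (∀ x ∈ S, ∀ z1 ∈ S, ∀ z2 ∈ S, Fadj x z1 → Fadj x z2 → z1 = z2) →
      ∃ T ⊆ S, (∀ x ∈ T, ∀ y ∈ T, x ≠ y → H.Adj x y) ∧ S.card ≤ 2 * T.card := by
  intro n
  induction n with
  | zero =>
    intro S hS _
    refine ⟨∅, empty_subset _, by simp, ?_⟩
    omega
  | succ n ih =>
    intro S hS h1
    rcases S.eq_empty_or_nonempty with rfl | ⟨x, hx⟩
    · exact ⟨∅, empty_subset _, by simp, by simp⟩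
    · set P := S.filter (fun z => Fadj x z) with hP
      have hPcard : P.card ≤ 1 := by
        refine card_le_one.2 ?_
        intro a ha b hb
        simp only [hP, mem_filter] at ha hb
        exact h1 x hx a ha.1 b hb.1 ha.2 hb.2
      set S' := (S.erase x) \ P with hS'
      have hS'sub : S' ⊆ S := (sdiff_subset).trans (erase_subset _ _)
      have hS'card : S'.card ≤ n := by
        have h2 : S' ⊆ S.erase x := sdiff_subset
        have := card_le_card h2
        have := card_erase_of_mem hx
        omega
      obtain ⟨T', hT'sub, hT'adj, hT'card⟩ := ih S' hS'card
        (fun a ha z1 h1' z2 h2' => h1 a (hS'sub ha) z1 (hS'sub h1') z2 (hS'sub h2'))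
      have hxT' : x ∉ T' := fun h => by
        have := hT'sub h
        simp [hS'] at this
      refine ⟨insert x T', ?_, ?_, ?_⟩
      · exact insert_subset hx (hT'sub.trans hS'sub)
      · intro a ha b hb hab
        rcases mem_insert.1 ha with rfl | ha' <;> rcases mem_insert.1 hb with rfl | hb'
        · exact absurd rfl hab
        · -- a = x, b ∈ T'
          have hbS' := hT'sub hb'
          have hbP : b ∉ P := by
            simp only [hS', mem_sdiff] at hbS'; exact hbS'.2
          have : ¬ Fadj a b := fun hf => hbP (by
            simp only [hP, mem_filter]
            exact ⟨hS'sub hbS', hf⟩)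
          exact hco _ _ hab this
        · have haS' := hT'sub ha'
          have haP : a ∉ P := by
            simp only [hS', mem_sdiff] at haS'; exact haS'.2
          have : ¬ Fadj b a := fun hf => haP (by
            simp only [hP, mem_filter]
            exact ⟨hS'sub haS', hf⟩)
          exact (hco _ _ (Ne.symm hab) this).symm
        · exact hT'adj a ha' b hb' hab
      · have hcard : (insert x T').card = T'.card + 1 := card_insert_of_notMem hxT'
        have hsub : S ⊆ insert x (S' ∪ P) := by
          intro a ha
          by_cases hax : a = x
          · simp [hax]
          · by_cases haP : a ∈ P
            · simp [haP]
            · have : a ∈ S' := by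
                simp only [hS', mem_sdiff, mem_erase]
                exact ⟨⟨hax, ha⟩, haP⟩
              simp [this]
        have := card_le_card hsub
        have h3 : (insert x (S' ∪ P)).card ≤ 1 + (S'.card + P.card) := by
          calc (insert x (S' ∪ P)).card ≤ (S' ∪ P).card + 1 := card_insert_le _ _
          _ ≤ _ := by
            have := card_union_le S' P
            omega
        omega

theorem core {W : Type*} [Fintype W] (H : SimpleGraph W)
    (hT : ∀ a b c : W, a ≠ b → a ≠ c → b ≠ c → ¬H.Adj a b → ¬H.Adj a c → ¬H.Adj b c → False)
    (hP : ∀ w a b c : W, H.Adj w a → H.Adj w b → H.Adj w c → a ≠ c → b ≠ c →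
      H.Adj a b → ¬H.Adj a c → ¬H.Adj b c → False) :
    Fintype.card W ≤ 2 * H.cliqueNum ∨
      (Nonempty (H ≃g cycleGraph 5) ∧ Fintype.card W = 5 ∧ H.cliqueNum = 2) := by
  classical
  set n := Fintype.card W with hn
  set ω := H.cliqueNum with hω
  by_cases hle : n ≤ 2 * ω
  · exact Or.inl hle
  right
  push_neg at hle
  -- F-adjacency (complement adjacency)
  set F : W → W → Prop := fun x y => x ≠ y ∧ ¬H.Adj x y with hF
  have hco : ∀ x y : W, x ≠ y → ¬ F x y → H.Adj x y := by
    intro x y h1 h2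
    by_contra h3
    exact h2 ⟨h1, h3⟩
  have hFsymm : ∀ x y : W, F x y → F y x := by
    rintro x y ⟨h1, h2⟩
    exact ⟨h1.symm, fun h => h2 h.symm⟩
  -- clique bound
  have cliqueue : ∀ T : Finset W, (∀ x ∈ T, ∀ y ∈ T, x ≠ y → H.Adj x y) → T.card ≤ ω := by
    intro T hadj
    have tc : H.IsClique (T : Set W) := fun x hx y hy hxy => hadj x hx y hy hxy
    exact tc.card_le_cliqueNum
  -- key consequence of hT, hP
  have hF3 : ∀ x y z1 z2 : W, H.Adj x y → F x z1 → F x z2 → z1 ≠ z2 →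
      ¬F y z1 → ¬F y z2 → z1 ≠ y → z2 ≠ y → False := by
    rintro x y z1 z2 hxy ⟨hxz1, haxz1⟩ ⟨hxz2, haxz2⟩ h12 hy1 hy2 h1y h2y
    have hyz1 : H.Adj y z1 := hco y z1 (Ne.symm h1y) (fun h => hy1 h)
    have hyz2 : H.Adj y z2 := hco y z2 (Ne.symm h2y) (fun h => hy2 h)
    by_cases h : H.Adj z1 z2
    · exact hP y z1 z2 x hyz1 hyz2 hxy.symm (Ne.symm hxz1) (Ne.symm hxz2) h
        (fun h' => haxz1 h'.symm) (fun h' => haxz2 h'.symm)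
    · exact hT x z1 z2 hxz1 hxz2 h12 haxz1 haxz2 h
  set NF : W → Finset W := fun w => Finset.univ.filter (fun z => F w z) with hNF
  have mem_NF : ∀ w z : W, z ∈ NF w ↔ F w z := by
    intro w z; simp [hNF]
  have hNFclique : ∀ w : W, ∀ z1 ∈ NF w, ∀ z2 ∈ NF w, z1 ≠ z2 → H.Adj z1 z2 := by
    intro w z1 h1 z2 h2 h12
    rw [mem_NF] at h1 h2
    by_contra h
    exact hT w z1 z2 h1.1 h2.1 h12 h1.2 h2.2 h
  have hdFle : ∀ w : W, (NF w).card ≤ ω := fun w => cliqueue _ (hNFclique w)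
  have hwNF : ∀ w : W, w ∉ NF w := by
    intro w h; rw [mem_NF] at h; exact h.1 rfl
  set D : W → Finset W := fun w => Finset.univ \ insert w (NF w) with hD
  have mem_D : ∀ w x : W, x ∈ D w ↔ (x ≠ w ∧ ¬ F w x) := by
    intro w x
    show x ∈ Finset.univ \ insert w (NF w) ↔ _
    rw [Finset.mem_sdiff, Finset.mem_insert, not_or, mem_NF]
    simp
  have hDadj : ∀ w : W, ∀ x ∈ D w, H.Adj w x := by
    intro w x hx
    rw [mem_D] at hx
    exact hco w x (Ne.symm hx.1) hx.2
  have hcardD : ∀ w : W, (D w).card + ((NF w).card + 1) = n := by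
    intro w
    have hsub : insert w (NF w) ⊆ Finset.univ := Finset.subset_univ _
    have := Finset.card_sdiff_add_card_eq_card hsub
    rw [Finset.card_insert_of_notMem (hwNF w)] at this
    simpa [hD, hn] using this
  -- uniqueness of H-neighbors in NF w for vertices of D w
  have huniq : ∀ w : W, ∀ x ∈ D w, ∀ a1 ∈ NF w, ∀ a2 ∈ NF w,
      H.Adj x a1 → H.Adj x a2 → a1 = a2 := by
    intro w x hx a1 ha1 a2 ha2 hxa1 hxa2
    by_contra h12
    rw [mem_NF] at ha1 ha2
    exact hF3 w x a1 a2 (hDadj w x hx) ha1 ha2 h12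
      (fun h => h.2 hxa1) (fun h => h.2 hxa2) hxa1.ne' hxa2.ne'
  -- Step 1: no vertex has F-degree ≥ 3
  have hBig : ∀ w : W, (NF w).card ≤ 2 := by
    intro w
    by_contra hbig
    push_neg at hbig
    have hDclq : ∀ x ∈ D w, ∀ x' ∈ D w, x ≠ x' → H.Adj x x' := by
      intro x hx x' hx' hxx'
      by_contra hadj
      have hfxx' : F x x' := ⟨hxx', hadj⟩
      have key : ∀ z ∈ D w, ((NF w).filter (fun a => F z a)).card + 1 ≥ (NF w).card := by
        intro z hz
        have h1 : ((NF w).filter (fun a => ¬ F z a)).card ≤ 1 := by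
          refine Finset.card_le_one.2 ?_
          intro a ha b hb
          simp only [Finset.mem_filter] at ha hb
          have haz : a ≠ z := fun h => ((mem_D w z).1 hz).2 (h ▸ (mem_NF w a).1 ha.1)
          have hbz : b ≠ z := fun h => ((mem_D w z).1 hz).2 (h ▸ (mem_NF w b).1 hb.1)
          exact huniq w z hz a ha.1 b hb.1 (hco z a (Ne.symm haz) ha.2)
            (hco z b (Ne.symm hbz) hb.2)
        have := Finset.card_filter_add_card_filter_not
          (s := NF w) (p := fun a => F z a)
        omega
      have k1 := key x hx
      have k2 := key x' hx'
      set A1 := (NF w).filter (fun a => F x a) with hA1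
      set A2 := (NF w).filter (fun a => F x' a) with hA2
      have hunion : (A1 ∪ A2).card ≤ (NF w).card :=
        Finset.card_le_card (Finset.union_subset (Finset.filter_subset _ _)
          (Finset.filter_subset _ _))
      have hie := Finset.card_union_add_card_inter A1 A2
      have hne : (A1 ∩ A2).Nonempty := by
        rw [← Finset.card_pos]
        omega
      obtain ⟨a, ha⟩ := hne
      rw [Finset.mem_inter] at ha
      have ha1 := ha.1; have ha2 := ha.2
      rw [hA1, Finset.mem_filter] at ha1
      rw [hA2, Finset.mem_filter] at ha2
      exact hT x x' a hxx' ha1.2.1 ha2.2.1 hadj ha1.2.2 ha2.2.2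
    have hwD : w ∉ D w := fun h => ((mem_D w w).1 h).1 rfl
    have hclq : (insert w (D w)).card ≤ ω := by
      refine cliqueue _ ?_
      intro x hx y hy hxy
      rcases Finset.mem_insert.1 hx with rfl | hx' <;>
        rcases Finset.mem_insert.1 hy with rfl | hy'
      · exact absurd rfl hxy
      · exact hDadj _ _ hy'
      · exact (hDadj _ _ hx').symm
      · exact hDclq _ hx' _ hy' hxy
    rw [Finset.card_insert_of_notMem hwD] at hclq
    have := hcardD w
    have := hdFle w
    omega
  -- Step 2: minimum F-degree
  have hdelta : ∀ w : W, n + 1 ≤ 2 * ω + (NF w).card := by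
    intro w
    obtain ⟨T, hTsub, hTadj, hTcard⟩ := matching_indep H F hco (D w).card (D w) le_rfl
      (fun x hx z1 h1 z2 h2 hf1 hf2 => by
        by_contra h12
        exact hF3 x w z1 z2 (hDadj w x hx).symm hf1 hf2 h12
          (fun h => h.2 (hDadj w z1 h1)) (fun h => h.2 (hDadj w z2 h2))
          (fun h => ((mem_D w z1).1 h1).1 (by rw [h]))
          (fun h => ((mem_D w z2).1 h2).1 (by rw [h])))
    have hwT : w ∉ T := fun h => ((mem_D w w).1 (hTsub h)).1 rfl
    have hclq : (insert w T).card ≤ ω := by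
      refine cliqueue _ ?_
      intro x hx y hy hxy
      rcases Finset.mem_insert.1 hx with rfl | hx' <;>
        rcases Finset.mem_insert.1 hy with rfl | hy'
      · exact absurd rfl hxy
      · exact hDadj _ _ (hTsub hy')
      · exact (hDadj _ _ (hTsub hx')).symm
      · exact hTadj _ hx' _ hy' hxy
    rw [Finset.card_insert_of_notMem hwT] at hclq
    have := hcardD w
    omega
  -- nonemptiness
  have hpos : 0 < Fintype.card W := by omega
  obtain ⟨w⟩ : Nonempty W := Fintype.card_pos_iff.1 hpos
  have hn5' : n = 2 * ω + 1 := by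
    have h1 := hdelta w
    have h2 := hBig w
    omega
  have hdF2 : ∀ v : W, (NF v).card = 2 := by
    intro v
    have h1 := hdelta v
    have h2 := hBig v
    omega
  obtain ⟨a, b, hab, hNFw⟩ := Finset.card_eq_two.1 (hdF2 w)
  have haNF : a ∈ NF w := by rw [hNFw]; simp
  have hbNF : b ∈ NF w := by rw [hNFw]; simp
  have hω2 : 2 ≤ ω := by
    have hpair : ({a, b} : Finset W).card ≤ ω := by
      refine cliqueue _ ?_
      intro p hp q hq hpq
      simp only [Finset.mem_insert, Finset.mem_singleton] at hp hq
      rcases hp with rfl | rfl <;> rcases hq with rfl | rfl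
      · exact absurd rfl hpq
      · exact hNFclique w p haNF q hbNF hpq
      · exact hNFclique w p hbNF q haNF hpq
      · exact absurd rfl hpq
    rwa [Finset.card_pair hab] at hpair
  -- covering D w by F-neighbors of a and b
  set Da := (D w).filter (fun z => F a z) with hDa
  set Db := (D w).filter (fun z => F b z) with hDb
  have hNFdisjD : ∀ c ∈ NF w, ∀ z ∈ D w, c ≠ z := by
    intro c hc z hz h
    exact ((mem_D w z).1 hz).2 (h ▸ (mem_NF w c).1 hc)
  have hcover : D w ⊆ Da ∪ Db := by
    intro z hz
    rw [Finset.mem_union, hDa, hDb, Finset.mem_filter, Finset.mem_filter]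
    by_contra hcon
    push_neg at hcon
    have h1 : ¬ F a z := hcon.1 hz
    have h2 : ¬ F b z := hcon.2 hz
    have hza : H.Adj z a := (hco a z (hNFdisjD a haNF z hz) h1).symm
    have hzb : H.Adj z b := (hco b z (hNFdisjD b hbNF z hz) h2).symm
    exact hab (huniq w z hz a haNF b hbNF hza hzb)
  have huniqDa : ∀ c ∈ NF w, ∀ z1 ∈ (D w).filter (fun z => F c z),
      ∀ z2 ∈ (D w).filter (fun z => F c z), z1 = z2 := by
    intro c hc z1 h1 z2 h2
    by_contra h12
    rw [Finset.mem_filter] at h1 h2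
    have hsub3 : ({w, z1, z2} : Finset W) ⊆ NF c := by
      intro t ht
      simp only [Finset.mem_insert, Finset.mem_singleton] at ht
      rw [mem_NF]
      rcases ht with h | h | h <;> rw [h]
      · exact hFsymm w c ((mem_NF w c).1 hc)
      · exact h1.2
      · exact h2.2
    have hc3 : ({w, z1, z2} : Finset W).card = 3 := by
      rw [Finset.card_insert_of_notMem, Finset.card_insert_of_notMem,
        Finset.card_singleton]
      · simp only [Finset.mem_singleton]; exact h12
      · simp only [Finset.mem_insert, Finset.mem_singleton, not_or]
        exact ⟨fun h => ((mem_D w z1).1 h1.1).1 h.symm,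
               fun h => ((mem_D w z2).1 h2.1).1 h.symm⟩
    have := Finset.card_le_card hsub3
    rw [hc3, hdF2 c] at this
    omega
  have hDale : Da.card ≤ 1 := Finset.card_le_one.2 (fun p hp q hq => huniqDa a haNF p hp q hq)
  have hDble : Db.card ≤ 1 := Finset.card_le_one.2 (fun p hp q hq => huniqDa b hbNF p hp q hq)
  have hDwcard : (D w).card = 2 := by
    have h1 := Finset.card_le_card hcover
    have h2 := Finset.card_union_le Da Db
    have h3 := hcardD w
    rw [hdF2 w] at h3
    omega
  have hn5 : n = 5 := by
    have h3 := hcardD w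
    rw [hdF2 w] at h3
    omega
  have hωval : ω = 2 := by omega
  obtain ⟨x, y, hxy, hDwxy⟩ := Finset.card_eq_two.1 hDwcard
  have hxD : x ∈ D w := by rw [hDwxy]; simp
  have hyD : y ∈ D w := by rw [hDwxy]; simp
  -- the common endgame
  have build : ∀ a b x y : W, a ∈ NF w → b ∈ NF w → a ≠ b → x ∈ D w → y ∈ D w → x ≠ y →
      F a x → F b y → ¬ F a y → ¬ F b x → Nonempty (H ≃g cycleGraph 5) := by
    clear haNF hbNF hab hxy hxD hyD hDwxy hDa hDb hcover hDale hDble huniqDa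
    clear hNFw
    intro a b x y haNF hbNF hab hxD hyD hxy hFax hFby hnFay hnFbx
    have hFwa := (mem_NF w a).1 haNF
    have hFwb := (mem_NF w b).1 hbNF
    -- distinctness
    have nwa : w ≠ a := hFwa.1
    have nwb : w ≠ b := hFwb.1
    have nwx : w ≠ x := fun h => ((mem_D w x).1 hxD).1 h.symm
    have nwy : w ≠ y := fun h => ((mem_D w y).1 hyD).1 h.symm
    have nax : a ≠ x := hFax.1
    have nay : a ≠ y := hNFdisjD a haNF y hyD
    have nbx : b ≠ x := hNFdisjD b hbNF x hxD
    have nby : b ≠ y := hFby.1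
    -- adjacencies
    have Awx : H.Adj w x := hDadj w x hxD
    have Awy : H.Adj w y := hDadj w y hyD
    have Aab : H.Adj a b := hNFclique w a haNF b hbNF hab
    have Aay : H.Adj a y := hco a y nay hnFay
    have Abx : H.Adj b x := hco b x nbx hnFbx
    have Nwa : ¬ H.Adj w a := hFwa.2
    have Nwb : ¬ H.Adj w b := hFwb.2
    have Nax : ¬ H.Adj a x := hFax.2
    have Nby : ¬ H.Adj b y := hFby.2
    -- the whole vertex set
    have hc5 : ({w, a, b, x, y} : Finset W).card = 5 := by
      have h2 : ({x, y} : Finset W).card = 2 := Finset.card_pair hxy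
      have h3 : ({b, x, y} : Finset W).card = 3 := by
        rw [Finset.card_insert_of_notMem (by simp [nbx, nby]), h2]
      have h4 : ({a, b, x, y} : Finset W).card = 4 := by
        rw [Finset.card_insert_of_notMem (by simp [hab, nax, nay]), h3]
      rw [Finset.card_insert_of_notMem (by simp [nwa, nwb, nwx, nwy]), h4]
    have hU : (Finset.univ : Finset W) = {w, a, b, x, y} :=
      (Finset.eq_univ_of_card _ (by rw [hc5, ← hn, hn5])).symm
    -- x and y are F-adjacent
    have hFxy : F x y := by
      have hsub : NF x ⊆ {a, y} := by
        intro t ht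
        have htu : t ∈ ({w, a, b, x, y} : Finset W) := hU ▸ Finset.mem_univ t
        have hFt := (mem_NF x t).1 ht
        simp only [Finset.mem_insert, Finset.mem_singleton] at htu ⊢
        rcases htu with rfl | rfl | rfl | rfl | rfl
        · exact (hFt.2 Awx.symm).elim
        · exact Or.inl rfl
        · exact (hFt.2 Abx.symm).elim
        · exact (hFt.1 rfl).elim
        · exact Or.inr rfl
      have heq : NF x = {a, y} := Finset.eq_of_subset_of_card_le hsub
        (by rw [Finset.card_pair nay, hdF2 x])
      exact (mem_NF x y).1 (by rw [heq]; simp)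
    have Nxy : ¬ H.Adj x y := hFxy.2
    -- build the isomorphism
    have hbij : Function.Bijective (![w, x, b, a, y] : Fin 5 → W) := by
      rw [Fintype.bijective_iff_surjective_and_card]
      constructor
      · intro v
        have hv : v ∈ ({w, a, b, x, y} : Finset W) := hU ▸ Finset.mem_univ v
        simp only [Finset.mem_insert, Finset.mem_singleton] at hv
        rcases hv with rfl | rfl | rfl | rfl | rfl
        exacts [⟨0, rfl⟩, ⟨3, rfl⟩, ⟨2, rfl⟩, ⟨1, rfl⟩, ⟨4, rfl⟩]
      · rw [Fintype.card_fin, ← hn, hn5]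
    refine ⟨SimpleGraph.Iso.symm ⟨Equiv.ofBijective _ hbij, ?_⟩⟩
    intro i j
    fin_cases i <;> fin_cases j <;>
      first
        | (refine iff_of_true ?_ (by decide); first
            | assumption
            | exact Awx.symm
            | exact Awy.symm
            | exact Aab.symm
            | exact Aay.symm
            | exact Abx.symm)
        | (refine iff_of_false ?_ (by decide); first
            | exact H.loopless.irrefl _
            | assumption
            | exact fun h => Nwa h.symm
            | exact fun h => Nwb h.symm
            | exact fun h => Nax h.symm
            | exact fun h => Nby h.symm
            | exact fun h => Nxy h.symm)
  rcases Finset.mem_union.1 (hcover hxD) with hxa | hxb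
  · have hyb : y ∈ Db := by
      rcases Finset.mem_union.1 (hcover hyD) with h | h
      · exact absurd (huniqDa a haNF x hxa y h) hxy
      · exact h
    have hxa' := (Finset.mem_filter.1 hxa).2
    have hyb' := (Finset.mem_filter.1 hyb).2
    have hnay : ¬ F a y := fun h =>
      hxy (huniqDa a haNF x hxa y (Finset.mem_filter.2 ⟨hyD, h⟩))
    have hnbx : ¬ F b x := fun h =>
      hxy (huniqDa b hbNF x (Finset.mem_filter.2 ⟨hxD, h⟩) y hyb)
    exact ⟨build a b x y haNF hbNF hab hxD hyD hxy hxa' hyb' hnay hnbx, hn5, hωval⟩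
  · have hya : y ∈ Da := by
      rcases Finset.mem_union.1 (hcover hyD) with h | h
      · exact h
      · exact absurd (huniqDa b hbNF x hxb y h) hxy
    have hxb' := (Finset.mem_filter.1 hxb).2
    have hya' := (Finset.mem_filter.1 hya).2
    have hnby : ¬ F b y := fun h =>
      hxy (huniqDa b hbNF x hxb y (Finset.mem_filter.2 ⟨hyD, h⟩))
    have hnax : ¬ F a x := fun h =>
      hxy (huniqDa a haNF x (Finset.mem_filter.2 ⟨hxD, h⟩) y hya)
    exact ⟨build b a x y hbNF haNF hab.symm hxD hyD hxy hxb' hya' hnby hnax, hn5, hωval⟩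

end Aux

set_option maxHeartbeats 1000000 in
theorem stmt_17 {V : Type*} [Fintype V] (G : SimpleGraph V)
    (hclaw : _root_.Free claw G) (hkk : _root_.Free kkJoin G) (u : V) :
    deg G u ≤ 2 * (G.induce (insert u (G.neighborSet u))).cliqueNum - 2 ∨
    (Nonempty (G.induce (G.neighborSet u) ≃g cycleGraph 5) ∧
      deg G u = 5 ∧ (G.induce (insert u (G.neighborSet u))).cliqueNum = 3) := by
  classical
  set N : Set V := G.neighborSet u with hN
  have huN : u ∉ N := fun h => G.loopless.irrefl u h
  set H : SimpleGraph ↥N := G.induce N with hH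
  -- degree bridge
  have hdeg : deg G u = Fintype.card ↥N := by
    unfold deg
    rw [← SimpleGraph.card_neighborSet_eq_degree]
  -- claw-freeness
  have hT : ∀ a b c : ↥N, a ≠ b → a ≠ c → b ≠ c →
      ¬H.Adj a b → ¬H.Adj a c → ¬H.Adj b c → False := by
    intro a b c hab hac hbc nab nac nbc
    have nab' : ¬G.Adj a.1 b.1 := nab
    have nac' : ¬G.Adj a.1 c.1 := nac
    have nbc' : ¬G.Adj b.1 c.1 := nbc
    have hua : G.Adj u a.1 := a.2
    have hub : G.Adj u b.1 := b.2
    have huc : G.Adj u c.1 := c.2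
    refine hclaw.false ⟨⟨Sum.elim (fun _ => u) ![a.1, b.1, c.1], ?_⟩, ?_⟩
    · rintro (i | i) (j | j) h
      · exact congrArg Sum.inl (Subsingleton.elim i j)
      · exfalso
        simp only [Sum.elim_inl, Sum.elim_inr] at h
        fin_cases j
        · exact G.loopless.irrefl _ (h ▸ hua)
        · exact G.loopless.irrefl _ (h ▸ hub)
        · exact G.loopless.irrefl _ (h ▸ huc)
      · exfalso
        simp only [Sum.elim_inl, Sum.elim_inr] at h
        fin_cases i
        · exact G.loopless.irrefl u (h ▸ hua)
        · exact G.loopless.irrefl u (h ▸ hub)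
        · exact G.loopless.irrefl u (h ▸ huc)
      · simp only [Sum.elim_inr] at h
        have hval : ∀ p q : ↥N, p.1 = q.1 → p = q := fun p q => Subtype.ext
        fin_cases i <;> fin_cases j <;>
          first
            | rfl
            | (exfalso
               first
                 | exact hab (hval _ _ h)
                 | exact hac (hval _ _ h)
                 | exact hbc (hval _ _ h)
                 | exact hab (hval _ _ h.symm)
                 | exact hac (hval _ _ h.symm)
                 | exact hbc (hval _ _ h.symm))
    · rintro (i | i) (j | j)
      · exact iff_of_false (G.loopless.irrefl u) (by simp [claw])
      · refine iff_of_true ?_ (by simp [claw])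
        fin_cases j
        exacts [hua, hub, huc]
      · refine iff_of_true ?_ (by simp [claw])
        fin_cases i
        exacts [hua.symm, hub.symm, huc.symm]
      · refine iff_of_false ?_ (by simp [claw])
        fin_cases i <;> fin_cases j <;>
          first
            | exact G.loopless.irrefl _
            | exact nab'
            | exact nac'
            | exact nbc'
            | exact fun h => nab' h.symm
            | exact fun h => nac' h.symm
            | exact fun h => nbc' h.symm
  have hP : ∀ w a b c : ↥N, H.Adj w a → H.Adj w b → H.Adj w c → a ≠ c → b ≠ c →
      H.Adj a b → ¬H.Adj a c → ¬H.Adj b c → False := by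
    intro w a b c hwa hwb hwc hac hbc hab nac nbc
    have hwa' : G.Adj w.1 a.1 := hwa
    have hwb' : G.Adj w.1 b.1 := hwb
    have hwc' : G.Adj w.1 c.1 := hwc
    have hab' : G.Adj a.1 b.1 := hab
    have nac' : ¬G.Adj a.1 c.1 := nac
    have nbc' : ¬G.Adj b.1 c.1 := nbc
    have hua : G.Adj u a.1 := a.2
    have hub : G.Adj u b.1 := b.2
    have huc : G.Adj u c.1 := c.2
    have huw : G.Adj u w.1 := w.2
    have vac : a.1 ≠ c.1 := fun h => hac (Subtype.ext h)
    have vbc : b.1 ≠ c.1 := fun h => hbc (Subtype.ext h)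
    have vab : a.1 ≠ b.1 := hab'.ne
    have vwa : w.1 ≠ a.1 := hwa'.ne
    have vwb : w.1 ≠ b.1 := hwb'.ne
    have vwc : w.1 ≠ c.1 := hwc'.ne
    have vua : u ≠ a.1 := hua.ne
    have vub : u ≠ b.1 := hub.ne
    have vuc : u ≠ c.1 := huc.ne
    have vuw : u ≠ w.1 := huw.ne
    refine hkk.false ⟨⟨![a.1, b.1, c.1, u, w.1], ?_⟩, ?_⟩
    · intro i j h
      fin_cases i <;> fin_cases j <;>
        first
          | rfl
          | (exfalso; first
              | exact vab h | exact vab h.symm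
              | exact vac h | exact vac h.symm
              | exact vbc h | exact vbc h.symm
              | exact vua h.symm | exact vua h
              | exact vub h.symm | exact vub h
              | exact vuc h.symm | exact vuc h
              | exact vuw h.symm | exact vuw h
              | exact vwa h | exact vwa h.symm
              | exact vwb h | exact vwb h.symm
              | exact vwc h | exact vwc h.symm)
    · intro i j
      fin_cases i <;> fin_cases j <;>
        first
          | (refine iff_of_true ?_ (by simp only [kkJoin, fromEdgeSet_adj,
                Set.mem_insert_iff, Set.mem_singleton_iff]; decide); first
              | exact hab' | exact hab'.symm
              | exact hua.symm | exact hua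
              | exact hub.symm | exact hub
              | exact huc.symm | exact huc
              | exact huw | exact huw.symm
              | exact hwa' | exact hwa'.symm
              | exact hwb' | exact hwb'.symm
              | exact hwc' | exact hwc'.symm)
          | (refine iff_of_false ?_ (by simp only [kkJoin, fromEdgeSet_adj,
                Set.mem_insert_iff, Set.mem_singleton_iff]; decide); first
              | exact G.loopless.irrefl _
              | exact nac' | exact fun h => nac' h.symm
              | exact nbc' | exact fun h => nbc' h.symm)
  -- cliqueNum bridge
  have uM : ↥(insert u N) := ⟨u, Set.mem_insert u N⟩
  have h3a : H.cliqueNum + 1 ≤ (G.induce (insert u N)).cliqueNum := by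
    obtain ⟨T, hTcl⟩ := H.exists_isNClique_cliqueNum
    have hinj : Function.Injective
        (fun z : ↥N => (⟨z.1, Set.mem_insert_of_mem u z.2⟩ : ↥(insert u N))) :=
      by intro p q h; simp only [Subtype.mk.injEq] at h; exact Subtype.ext h
    set T' : Finset ↥(insert u N) :=
      insert ⟨u, Set.mem_insert u N⟩ (T.image
        (fun z : ↥N => (⟨z.1, Set.mem_insert_of_mem u z.2⟩ : ↥(insert u N)))) with hT'
    have huim : (⟨u, Set.mem_insert u N⟩ : ↥(insert u N)) ∉ T.image
        (fun z : ↥N => (⟨z.1, Set.mem_insert_of_mem u z.2⟩ : ↥(insert u N))) := by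
      intro h
      obtain ⟨z, _, hzeq⟩ := Finset.mem_image.1 h
      exact huN ((show z.1 = u from congrArg Subtype.val hzeq) ▸ z.2)
    have hcl : (G.induce (insert u N)).IsClique (T' : Set ↥(insert u N)) := by
      intro p hp q hq hpq
      simp only [hT', Finset.coe_insert, Set.mem_insert_iff, Finset.coe_image,
        Set.mem_image, Finset.mem_coe] at hp hq
      rcases hp with rfl | ⟨z1, hz1, rfl⟩ <;> rcases hq with rfl | ⟨z2, hz2, rfl⟩
      · exact absurd rfl hpq
      · exact z2.2
      · exact (z1.2 : G.Adj u z1.1).symm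
      · have hz12 : z1 ≠ z2 := fun h => hpq (by rw [h])
        exact hTcl.1 hz1 hz2 hz12
    have hle := hcl.card_le_cliqueNum
    rw [hT', Finset.card_insert_of_notMem huim, Finset.card_image_of_injective _ hinj,
      hTcl.2] at hle
    exact hle
  have h3b : (G.induce (insert u N)).cliqueNum ≤ H.cliqueNum + 1 := by
    obtain ⟨S, hScl⟩ := (G.induce (insert u N)).exists_isNClique_cliqueNum
    set S0 := S.erase ⟨u, Set.mem_insert u N⟩ with hS0
    have hmem : ∀ z ∈ S0, z.1 ∈ N := by
      intro z hz
      have h1 := Finset.mem_erase.1 hz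
      rcases Set.mem_insert_iff.1 z.2 with h | h
      · exact absurd (Subtype.ext h) h1.1
      · exact h
    set S1 : Finset ↥N := S0.attach.image
      (fun z => (⟨z.1.1, hmem z.1 z.2⟩ : ↥N)) with hS1
    have hcard1 : S1.card = S0.card := by
      have hinj2 : Function.Injective
          (fun z : {x // x ∈ S0} => (⟨z.1.1, hmem z.1 z.2⟩ : ↥N)) :=
        by intro p q h; simp only [Subtype.mk.injEq] at h; exact Subtype.ext (Subtype.ext h)
      rw [hS1, Finset.card_image_of_injective _ hinj2, Finset.card_attach]
    have hcl : H.IsClique (S1 : Set ↥N) := by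
      intro p hp q hq hpq
      simp only [hS1, Finset.coe_image, Set.mem_image, Finset.mem_coe] at hp hq
      obtain ⟨z1, _, rfl⟩ := hp
      obtain ⟨z2, _, rfl⟩ := hq
      have h1 : z1.1 ∈ S := Finset.mem_of_mem_erase z1.2
      have h2 : z2.1 ∈ S := Finset.mem_of_mem_erase z2.2
      have h12 : z1.1 ≠ z2.1 := fun h => hpq (by simp [h])
      exact hScl.1 h1 h2 (fun h => h12 (Subtype.ext (congrArg Subtype.val h)))
    have hle := hcl.card_le_cliqueNum
    have hub2 : S.card ≤ S0.card + 1 := by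
      rw [hS0]
      by_cases hu : (⟨u, Set.mem_insert u N⟩ : ↥(insert u N)) ∈ S
      · rw [Finset.card_erase_of_mem hu]; omega
      · rw [Finset.erase_eq_of_notMem hu]; omega
    rw [hcard1] at hle
    rw [← hScl.2]
    omega
  -- conclusion
  rcases core H hT hP with h | ⟨hiso, hc5, hω2⟩
  · left
    rw [← hdeg] at h
    omega
  · right
    refine ⟨hiso, by rw [hdeg, hc5], by omega⟩
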